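/- Let n be divisible by 4 and let C ∈ Mₙ(ℤ) be a symmetric matrix all of whose diagonal entries are even. Then det(C) ≡ 0 or 1 (mod 4). -/

import Mathlib

open Matrix

private abbrev Ev (u : ZMod 4) : Prop := u = 0 ∨ u = 2

private lemma ev_two_mul : ∀ k : ZMod 4, Ev (2 * k) := by decide

private lemma ev_det_aux : ∀ a b u : ZMod 4, Ev a → Ev b → ¬ Ev u →
    a * b - u * u = -1 := by decide

private lemma ev_quad_aux : ∀ d a b u x y : ZMod 4, Ev d → Ev a → Ev b →
    Ev (d - (x * -a * x + x * u * y + y * u * x + y * -b * y)) := by decide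

private lemma ev_if (v : ZMod 4) (h : Ev v) :
    v = 2 * (if v = 0 then 0 else 1) := by
  rcases h with h | h <;> rw [h] <;> decide

private def e₂ {α : Type} [DecidableEq α] (i j : α) (hij : i ≠ j) :
    Fin 2 ≃ {x // x = i ∨ x = j} where
  toFun := fun t => if t = 0 then ⟨i, Or.inl rfl⟩ else ⟨j, Or.inr rfl⟩
  invFun := fun s => if s.1 = i then 0 else 1
  left_inv := by
    intro t
    fin_cases t
    · simp
    · simp [Ne.symm hij]
  right_inv := by
    rintro ⟨x, hx | hx⟩ <;> subst hx <;> simp [Ne.symm hij]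

private def eqv {α : Type} [DecidableEq α] (i j : α) (hij : i ≠ j) :
    (Fin 2 ⊕ {x : α // ¬ (x = i ∨ x = j)}) ≃ α :=
  (Equiv.sumCongr (e₂ i j hij) (Equiv.refl _)).trans
    (Equiv.sumCompl (fun x => x = i ∨ x = j))

private lemma eqv_inl0 {α : Type} [DecidableEq α] (i j : α) (hij : i ≠ j) :
    eqv i j hij (Sum.inl 0) = i := by simp [eqv, e₂]

private lemma eqv_inl1 {α : Type} [DecidableEq α] (i j : α) (hij : i ≠ j) :
    eqv i j hij (Sum.inl 1) = j := by simp [eqv, e₂]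

private lemma eqv_inr {α : Type} [DecidableEq α] (i j : α) (hij : i ≠ j)
    (b : {x : α // ¬ (x = i ∨ x = j)}) : eqv i j hij (Sum.inr b) = b.1 := by
  simp [eqv]

private lemma key : ∀ (m : ℕ) (α : Type) [Fintype α] [DecidableEq α],
    Fintype.card α = m → m % 2 = 0 →
    ∀ M : Matrix α α (ZMod 4), M.IsSymm → (∀ i, Ev (M i i)) →
    (M.det = 0 ∨ M.det = (-1) ^ (m / 2)) := by
  intro m
  induction m using Nat.strong_induction_on with
  | _ m ih =>
    intro α _ _ hcard hm2 M hsymm hdiag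
    by_cases hall : ∀ i j : α, Ev (M i j)
    · -- all entries even
      rcases Nat.eq_zero_or_pos m with hm0 | hmpos
      · subst hm0
        have : IsEmpty α := Fintype.card_eq_zero_iff.mp hcard
        right
        simp [Matrix.det_isEmpty]
      · have hm2' : 2 ≤ m := by omega
        left
        set N : Matrix α α (ZMod 4) := fun i j => if M i j = 0 then 0 else 1 with hN
        have hMN : M = (2 : ZMod 4) • N := by
          ext i j
          rw [Matrix.smul_apply, hN]
          exact ev_if _ (hall i j)
        rw [hMN, Matrix.det_smul, hcard]
        obtain ⟨k, hk⟩ : ∃ k, m = 2 + k := ⟨m - 2, by omega⟩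
        rw [hk, pow_add]
        have : (2 : ZMod 4) ^ 2 = 0 := by decide
        rw [this, zero_mul, zero_mul]
    · simp only [not_forall] at hall
      obtain ⟨i, j, hodd⟩ := hall
      have hij : i ≠ j := by
        rintro rfl; exact hodd (hdiag i)
      have hMji : M j i = M i j := hsymm.apply i j
      set e := eqv i j hij with he
      set M' : Matrix (Fin 2 ⊕ {x : α // ¬ (x = i ∨ x = j)})
          (Fin 2 ⊕ {x : α // ¬ (x = i ∨ x = j)}) (ZMod 4) :=
        M.submatrix e e with hM'
      have hdetM' : M'.det = M.det := Matrix.det_submatrix_equiv_self e M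
      have hM'symm : M'.IsSymm := hsymm.submatrix e
      set A := M'.toBlocks₁₁ with hA
      set B := M'.toBlocks₁₂ with hB
      set Cm := M'.toBlocks₂₁ with hCm
      set D := M'.toBlocks₂₂ with hD
      have hA00 : A 0 0 = M i i := by
        simp [hA, hM', Matrix.toBlocks₁₁, he, eqv_inl0]
      have hA11 : A 1 1 = M j j := by
        simp [hA, hM', Matrix.toBlocks₁₁, he, eqv_inl1]
      have hA01 : A 0 1 = M i j := by
        simp [hA, hM', Matrix.toBlocks₁₁, he, eqv_inl0, eqv_inl1]
      have hA10 : A 1 0 = M i j := by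
        simp [hA, hM', Matrix.toBlocks₁₁, he, eqv_inl0, eqv_inl1, hMji]
      have hdetA : A.det = -1 := by
        rw [Matrix.det_fin_two, hA00, hA11, hA01, hA10]
        exact ev_det_aux _ _ _ (hdiag i) (hdiag j) hodd
      have hAinvertible : Invertible A :=
        Matrix.invertibleOfIsUnitDet A (by rw [hdetA]; exact isUnit_one.neg)
      set Ainv : Matrix (Fin 2) (Fin 2) (ZMod 4) :=
        !![-(A 1 1), A 0 1; A 1 0, -(A 0 0)] with hAinvDef
      have hmul : A * Ainv = 1 := by
        have hd : A 0 0 * A 1 1 - A 0 1 * A 1 0 = -1 := by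
          rw [← Matrix.det_fin_two]; exact hdetA
        ext a b
        fin_cases a <;> fin_cases b <;>
          simp [hAinvDef, Matrix.mul_apply, Fin.sum_univ_two, Matrix.one_apply] <;>
          first
            | linear_combination -hd
            | linear_combination hd
            | linear_combination (-2 : ZMod 4) * hd
            | linear_combination (2 : ZMod 4) * hd
            | ring
      have hAinv : A⁻¹ = Ainv := Matrix.inv_eq_right_inv hmul
      have hinvOf : ⅟A = Ainv := by rw [Matrix.invOf_eq_nonsing_inv, hAinv]
      set S := D - Cm * Ainv * B with hS
      have hdet : M.det = A.det * S.det := by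
        rw [← hdetM', ← Matrix.fromBlocks_toBlocks M', Matrix.det_fromBlocks₁₁,
          hinvOf, ← hA, ← hB, ← hCm, ← hD, ← hS]
      have hBC : ∀ (a : Fin 2) (k : {x : α // ¬ (x = i ∨ x = j)}),
          B a k = Cm k a := by
        intro a k
        simp only [hB, hCm, Matrix.toBlocks₁₂, Matrix.toBlocks₂₁, Matrix.of_apply]
        exact hM'symm.apply _ _
      have hDsymm : ∀ k l, D l k = D k l := by
        intro k l
        simp only [hD, Matrix.toBlocks₂₂, Matrix.of_apply]
        exact hM'symm.apply _ _
      have hSentry : ∀ k l, S k l = D k l -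
          (Cm k 0 * (-(A 1 1)) * Cm l 0 + Cm k 0 * A 0 1 * Cm l 1 +
           Cm k 1 * A 1 0 * Cm l 0 + Cm k 1 * (-(A 0 0)) * Cm l 1) := by
        intro k l
        simp [hS, Matrix.sub_apply, Matrix.mul_apply, Fin.sum_univ_two,
          hAinvDef, hBC]
        ring
      have hSsymm : S.IsSymm := by
        rw [Matrix.IsSymm]
        ext k l
        rw [Matrix.transpose_apply, hSentry, hSentry, hDsymm, hA01, hA10]
        ring
      have hSdiag : ∀ k, Ev (S k k) := by
        intro k
        rw [hSentry, hA01, hA10, hA00, hA11]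
        have hDkk : Ev (D k k) := by
          simp only [hD, Matrix.toBlocks₂₂, Matrix.of_apply, hM',
            Matrix.submatrix_apply, he, eqv_inr]
          exact hdiag _
        exact ev_quad_aux _ _ _ _ _ _ hDkk (hdiag j) (hdiag i)
      have hcard2 : Fintype.card {x : α // x = i ∨ x = j} = 2 := by
        rw [← Fintype.card_congr (e₂ i j hij), Fintype.card_fin]
      have hcardβ : Fintype.card {x : α // ¬ (x = i ∨ x = j)} = m - 2 := by
        rw [Fintype.card_subtype_compl, hcard2, hcard]
      have hm1 : 1 ≤ m := by
        have : Nonempty α := ⟨i⟩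
        have := Fintype.card_pos_iff.mpr this
        omega
      have hmge2 : 2 ≤ m := by omega
      have hIH := ih (m - 2) (by omega) {x : α // ¬ (x = i ∨ x = j)} hcardβ
        (by omega) S hSsymm hSdiag
      rcases hIH with h0 | h1
      · left; rw [hdet, h0, mul_zero]
      · right
        rw [hdet, h1, hdetA]
        have : m / 2 = (m - 2) / 2 + 1 := by omega
        rw [this, pow_succ]
        ring

/-- Let `4 ∣ n` and let `C ∈ Mₙ(ℤ)` be a symmetric matrix all of whose diagonal
entries are even.  Then `det C ≡ 0` or `1 (mod 4)`. -/
theorem det_symm_even_diag_mod_four (n : ℕ) (hn : 4 ∣ n)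
    (C : Matrix (Fin n) (Fin n) ℤ) (hsymm : C.IsSymm) (hdiag : ∀ i, 2 ∣ C i i) :
    C.det % 4 = 0 ∨ C.det % 4 = 1 := by
  set f : ℤ →+* ZMod 4 := Int.castRingHom (ZMod 4) with hf
  set M : Matrix (Fin n) (Fin n) (ZMod 4) := f.mapMatrix C with hM
  have hMsymm : M.IsSymm := by
    rw [Matrix.IsSymm, hM]
    simp only [RingHom.mapMatrix_apply, ← Matrix.transpose_map]
    try rw [hsymm]
  have hMdiag : ∀ i, Ev (M i i) := by
    intro i
    obtain ⟨k, hk⟩ := hdiag i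
    have h2 : M i i = 2 * (k : ZMod 4) := by
      simp [hM, hk, hf]
      try push_cast
      try ring
    rw [h2]
    exact ev_two_mul _
  have hdet : (C.det : ZMod 4) = M.det := by
    rw [hM, ← RingHom.map_det]; rfl
  have hpar : n % 2 = 0 := by omega
  have hkey := key n (Fin n) (by simp) hpar M hMsymm hMdiag
  have hpow : ((-1 : ZMod 4)) ^ (n / 2) = 1 := by
    obtain ⟨t, rfl⟩ := hn
    have h42 : 4 * t / 2 = 2 * t := by omega
    rw [h42, pow_mul]
    norm_num
  rcases hkey with h0 | h1
  · left
    have hc : (C.det : ZMod 4) = ((0 : ℤ) : ZMod 4) := by rw [hdet, h0]; simp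
    have hmod := (ZMod.intCast_eq_intCast_iff _ _ _).mp hc
    rw [Int.ModEq] at hmod
    simpa using hmod
  · right
    have hc : (C.det : ZMod 4) = ((1 : ℤ) : ZMod 4) := by
      rw [hdet, h1, hpow]; simp
    have hmod := (ZMod.intCast_eq_intCast_iff _ _ _).mp hc
    rw [Int.ModEq] at hmod
    simpa using hmod
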